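/- arXiv:2207.05035 — 2 statements merged into one kernel-verified Lean document; each statement's English description precedes it below -/
import Mathlib

section
/- Let p ≥ 2, r ≥ 0, g ≥ 1 and u be integers with p = 2^r g + u and 0 ≤ u < 2^r, and let d be an integer with 0 < |d| < p/2^{r+1}. Then | Σ_{y=0}^{g−1} e^{2πi·2^r d y/p} | ≤ 1. -/
open Complex

noncomputable section


lemma norm_exp_mul_I_sub_one (θ : ℝ) :
    ‖Complex.exp ((θ : ℂ) * Complex.I) - 1‖ = 2 * |Real.sin (θ / 2)| := by
  rw [Complex.exp_mul_I]
  have h1 : Complex.cos θ + Complex.sin θ * Complex.I - 1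
      = ((Real.cos θ - 1 : ℝ) : ℂ) + (Real.sin θ : ℝ) * Complex.I := by
    push_cast; ring
  rw [h1, Complex.norm_add_mul_I]
  have h2 : (Real.cos θ - 1) ^ 2 + Real.sin θ ^ 2 = (2 * Real.sin (θ / 2)) ^ 2 := by
    have e1 := Real.cos_sq (θ / 2)
    have e2 := Real.sin_sq_add_cos_sq (θ / 2)
    have e3 := Real.sin_sq_add_cos_sq θ
    have h4 : 2 * (θ / 2) = θ := by ring
    rw [h4] at e1
    nlinarith [e1, e2, e3]
  rw [h2, Real.sqrt_sq_eq_abs, abs_mul]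
  norm_num

lemma abs_sin_eq_sin_abs (a : ℝ) (ha : |a| ≤ Real.pi) : |Real.sin a| = Real.sin |a| := by
  rcases le_or_gt 0 a with h | h
  · rw [_root_.abs_of_nonneg h,
      _root_.abs_of_nonneg (Real.sin_nonneg_of_nonneg_of_le_pi h (by rwa [_root_.abs_of_nonneg h] at ha))]
  · have ha' : -Real.pi ≤ a := by
      have := neg_abs_le a; linarith
    rw [abs_of_neg h, Real.sin_neg, abs_of_nonpos (Real.sin_nonpos_of_nonpos_of_neg_pi_le h.le ha')]


/-- Let `p = 2^r g + u` with `g ≥ 1` and `0 ≤ u < 2^r`, and let `d` be an integer with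
`0 < |d| < p/2^{r+1}`.  Then `|∑_{y=0}^{g-1} e^{2πi·2^r d y/p}| ≤ 1`. -/
theorem geometric_sum_le_one (p r g u : ℕ) (hp : 2 ≤ p) (hg : 1 ≤ g)
    (hpu : p = 2 ^ r * g + u) (hu : u < 2 ^ r)
    (d : ℤ) (hd₀ : d ≠ 0) (hd : |(d : ℝ)| < (p : ℝ) / 2 ^ (r + 1)) :
    ‖∑ y ∈ Finset.range g,
        Complex.exp (2 * Real.pi * Complex.I * ((2 : ℂ) ^ r * (d : ℂ) * (y : ℂ)) / (p : ℂ))‖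
      ≤ 1 := by
  have hp0 : (0:ℝ) < p := by exact_mod_cast (show 0 < p by omega)
  have hpne : (p:ℂ) ≠ 0 := by exact_mod_cast (show (p:ℝ) ≠ 0 from hp0.ne')
  have hpi := Real.pi_pos
  set θ : ℝ := 2 ^ r * (d:ℝ) / p with hθdef
  have hdabs : (0:ℝ) < |(d:ℝ)| := by
    simp only [abs_pos]; exact_mod_cast hd₀
  have h2r : (0:ℝ) < 2 ^ r := by positivity
  have hθabseq : |θ| = 2 ^ r * |(d:ℝ)| / p := by
    rw [hθdef, abs_div, abs_mul, abs_of_pos h2r, abs_of_pos hp0]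
  have hθabs : |θ| < 1 / 2 := by
    rw [hθabseq, div_lt_iff₀ hp0]
    have h2 : (2:ℝ) ^ (r+1) = 2 * 2 ^ r := by ring
    rw [lt_div_iff₀ (by positivity), h2] at hd
    nlinarith
  have hθ0 : θ ≠ 0 := by
    rw [hθdef]
    have : (d:ℝ) ≠ 0 := by exact_mod_cast hd₀
    positivity
  -- rewrite summands as powers
  have hterm : ∀ y ∈ Finset.range g,
      Complex.exp (2 * Real.pi * Complex.I * ((2 : ℂ) ^ r * (d : ℂ) * (y : ℂ)) / (p : ℂ))
        = Complex.exp (((2 * Real.pi * θ : ℝ) : ℂ) * Complex.I) ^ y := by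
    intro y _
    rw [← Complex.exp_nat_mul]
    congr 1
    rw [hθdef]
    push_cast
    field_simp
  rw [Finset.sum_congr rfl hterm]
  set z : ℂ := Complex.exp (((2 * Real.pi * θ : ℝ) : ℂ) * Complex.I) with hzdef
  -- z ≠ 1
  have hz : z ≠ 1 := by
    rw [hzdef]
    intro h
    rw [Complex.exp_eq_one_iff] at h
    obtain ⟨n, hn⟩ := h
    have h2 : ((2 * Real.pi * θ : ℝ) : ℂ) * Complex.I = ((n : ℂ) * (2 * Real.pi)) * Complex.I := by
      rw [hn]; ring
    have h3 : ((2 * Real.pi * θ : ℝ) : ℂ) = (n : ℂ) * (2 * Real.pi) :=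
      mul_right_cancel₀ Complex.I_ne_zero h2
    have h4 : (2 * Real.pi * θ : ℝ) = (n : ℝ) * (2 * Real.pi) := by exact_mod_cast h3
    have h5 : θ = (n : ℝ) := by
      have hpi' : (2 * Real.pi : ℝ) ≠ 0 := by positivity
      have h4' : (2 * Real.pi) * θ = (2 * Real.pi) * (n : ℝ) := by linarith
      exact mul_left_cancel₀ hpi' h4'
    have hn0 : n ≠ 0 := by
      rintro rfl; simp at h5; exact hθ0 h5
    have h6 : (1:ℝ) ≤ |(n:ℝ)| := by
      have := Int.one_le_abs hn0
      exact_mod_cast this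
    rw [h5] at hθabs
    linarith
  rw [geom_sum_eq hz, norm_div]
  have hzg : z ^ g = Complex.exp ((((g : ℝ) * (2 * Real.pi * θ) : ℝ) : ℂ) * Complex.I) := by
    rw [hzdef, ← Complex.exp_nat_mul]
    congr 1
    push_cast
    ring
  rw [hzg, norm_exp_mul_I_sub_one, norm_exp_mul_I_sub_one]
  -- angle identities
  have h2rg : ((2:ℝ) ^ r * g) = (p:ℝ) - u := by
    have : (p:ℝ) = 2 ^ r * g + u := by exact_mod_cast hpu
    linarith
  have hgθ' : (g:ℝ) * θ = (d:ℝ) - (u:ℝ) * d / p := by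
    have h1 : (g:ℝ) * θ = ((2:ℝ) ^ r * g) * d / p := by rw [hθdef]; ring
    rw [h1, h2rg]
    field_simp
  have hgθ : (g:ℝ) * (2 * Real.pi * θ) / 2 = (d:ℝ) * Real.pi - Real.pi * ((u:ℝ) * d / p) := by
    have h1 : (g:ℝ) * (2 * Real.pi * θ) / 2 = Real.pi * ((g:ℝ) * θ) := by ring
    rw [h1, hgθ']; ring
  have hb : 2 * Real.pi * θ / 2 = Real.pi * θ := by ring
  rw [hgθ, hb, Real.sin_int_mul_pi_sub]
  -- now compare the two sines
  set a : ℝ := Real.pi * ((u:ℝ) * d / p) with hadef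
  set b : ℝ := Real.pi * θ with hbdef
  have habs_simp : |(-((-1:ℝ) ^ d * Real.sin a))| = |Real.sin a| := by
    rw [abs_neg, abs_mul]
    rcases Int.even_or_odd d with he | he
    · rw [he.neg_one_zpow]; simp
    · rw [he.neg_one_zpow]; simp
  rw [habs_simp]
  have hbabs : |b| = Real.pi * |θ| := by
    rw [hbdef, abs_mul, abs_of_pos hpi]
  have hbltpi2 : |b| < Real.pi / 2 := by
    rw [hbabs]; nlinarith
  have haleb : |a| ≤ |b| := by
    rw [hadef, hbdef, abs_mul, abs_mul, abs_of_pos hpi, hθabseq]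
    have hud : |(u:ℝ) * d / p| = (u:ℝ) * |(d:ℝ)| / p := by
      rw [abs_div, abs_mul, Nat.abs_cast, abs_of_pos hp0]
    rw [hud]
    have hule : (u:ℝ) ≤ 2 ^ r := by exact_mod_cast hu.le
    gcongr
  have hbpos : 0 < |b| := by
    rw [hbabs]
    have : 0 < |θ| := abs_pos.mpr hθ0
    positivity
  have hsinb_pos : 0 < |Real.sin b| := by
    rw [abs_sin_eq_sin_abs b (by linarith)]
    exact Real.sin_pos_of_pos_of_lt_pi hbpos (by linarith)
  have hsin_le : |Real.sin a| ≤ |Real.sin b| := by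
    rw [abs_sin_eq_sin_abs a (by linarith), abs_sin_eq_sin_abs b (by linarith)]
    exact Real.sin_le_sin_of_le_of_le_pi_div_two (by linarith [abs_nonneg a]) hbltpi2.le haleb
  rw [div_le_one (by linarith)]
  linarith
end
end

section
/- Fix a cutoff φ ∈ C_c^∞(ℝ) with 0 ≤ φ ≤ 1, φ ≡ 1 on [−2,2] and supp φ ⊂ [−2−1/100, 2+1/100]. For integers p ≥ 2 and r ≥ 0 define ψ_r(t) = Σ_{l∈ℤ} φ(l/2^r) e^{2πi l t/p} (a finite sum). Then there is a constant C depending only on φ such that for every integer t not divisible by p, |ψ_r(t)| ≤ C 2^{−r} p² / dist_p(t,0)². -/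
open Complex

noncomputable section

/-- `dist_p(a,b)` for integers `a`, `b`: the absolute value of the representative `c` of
`a - b (mod p)` with `-p/2 < c ≤ p/2`. -/
def distIntMod (p : ℕ) (a b : ℤ) : ℤ := min ((a - b) % (p : ℤ)) ((b - a) % (p : ℤ))

/-- `ψ_r(t) = ∑_{l ∈ ℤ} φ(l/2^r) e^{2πilt/p}` (a finite sum since `φ` has compact
support), evaluated at an integer `t`. -/
def psiInt (φ : ℝ → ℝ) (p : ℕ) (r : ℕ) (t : ℤ) : ℂ :=
  ∑' l : ℤ, (φ ((l : ℝ) / 2 ^ r) : ℂ) *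
    Complex.exp (2 * Real.pi * Complex.I * (l : ℂ) * (t : ℂ) / (p : ℂ))

lemma abel_step (z : ℂ) (hz : z ≠ 0) (f : ℤ → ℂ) (s : Finset ℤ)
    (hf : ∀ l ∉ s, f l = 0) :
    (1 - z) * ∑' l : ℤ, f l * z ^ l = ∑' l : ℤ, (f l - f (l - 1)) * z ^ l := by
  have h0 : ∀ l ∉ s, f l * z ^ l = 0 := fun l hl => by rw [hf l hl, zero_mul]
  have hs1 : Summable (fun l : ℤ => f l * z ^ l) := summable_of_ne_finset_zero h0
  have hs2 : Summable (fun l : ℤ => f (l - 1) * z ^ l) := by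
    apply summable_of_ne_finset_zero (s := s.image (· + 1))
    intro l hl
    have hfl : f (l - 1) = 0 := by
      apply hf
      intro hmem
      exact hl (Finset.mem_image.2 ⟨l - 1, hmem, by ring⟩)
    rw [hfl, zero_mul]
  have key : ∑' l : ℤ, f (l - 1) * z ^ l = z * ∑' l : ℤ, f l * z ^ l := by
    rw [← tsum_mul_left]
    calc ∑' l : ℤ, f (l - 1) * z ^ l
        = ∑' l : ℤ, f ((l + 1) - 1) * z ^ (l + 1) := by
          exact ((Equiv.addRight (1 : ℤ)).tsum_eq fun l : ℤ => f (l - 1) * z ^ l).symm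
      _ = ∑' l : ℤ, z * (f l * z ^ l) := by
          refine tsum_congr fun l => ?_
          rw [add_sub_cancel_right, zpow_add_one₀ hz]
          ring
  have hfun : (fun l : ℤ => (f l - f (l - 1)) * z ^ l)
      = fun l : ℤ => f l * z ^ l - f (l - 1) * z ^ l := by funext l; ring
  rw [hfun, Summable.tsum_sub hs1 hs2, key]
  ring

lemma second_diff_bound (φ : ℝ → ℝ) (hφ : ContDiff ℝ (⊤ : ℕ∞) φ) (M : ℝ)
    (hM : ∀ y, |deriv (deriv φ) y| ≤ M) (x h : ℝ) (hh : 0 ≤ h) :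
    |φ x - 2 * φ (x - h) + φ (x - 2 * h)| ≤ M * h ^ 2 := by
  have hd1 : Differentiable ℝ φ := hφ.differentiable (by simp)
  have hφ' : ContDiff ℝ (⊤ : ℕ∞) (deriv φ) := by
    have := (contDiff_infty_iff_deriv.mp (by exact_mod_cast hφ)).2
    exact_mod_cast this
  have hd2 : Differentiable ℝ (deriv φ) := hφ'.differentiable (by simp)
  set g : ℝ → ℝ := fun y => φ y - φ (y - h) with hg
  have hshift : ∀ y : ℝ, HasDerivAt (fun w => φ (w - h)) (deriv φ (y - h)) y := by
    intro y
    have := ((hd1 (y - h)).hasDerivAt).comp y ((hasDerivAt_id y).sub_const h)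
    rw [mul_one] at this
    exact this
  have hgderiv : ∀ y : ℝ, HasDerivAt g (deriv φ y - deriv φ (y - h)) y := fun y =>
    ((hd1 y).hasDerivAt).sub (hshift y)
  have hgbound : ∀ y ∈ (Set.univ : Set ℝ), ‖deriv g y‖ ≤ M * h := by
    intro y _
    rw [(hgderiv y).deriv, Real.norm_eq_abs]
    have hmvt := Convex.norm_image_sub_le_of_norm_deriv_le (s := (Set.univ : Set ℝ))
      (f := deriv φ) (fun w _ => hd2 w) (fun w _ => by
        rw [Real.norm_eq_abs]; exact hM w) convex_univ (Set.mem_univ (y - h)) (Set.mem_univ y)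
    calc |deriv φ y - deriv φ (y - h)| ≤ M * ‖y - (y - h)‖ := hmvt
      _ = M * h := by
          rw [show y - (y - h) = h by ring, Real.norm_eq_abs, _root_.abs_of_nonneg hh]
  have key : ‖g x - g (x - h)‖ ≤ (M * h) * ‖x - (x - h)‖ :=
    Convex.norm_image_sub_le_of_norm_deriv_le (s := (Set.univ : Set ℝ))
      (fun w _ => (hgderiv w).differentiableAt) hgbound convex_univ
      (Set.mem_univ (x - h)) (Set.mem_univ x)
  have e1 : g x - g (x - h) = φ x - 2 * φ (x - h) + φ (x - 2 * h) := by
    simp only [hg]; ring_nf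
  rw [e1] at key
  calc |φ x - 2 * φ (x - h) + φ (x - 2 * h)| ≤ (M * h) * ‖x - (x - h)‖ := key
    _ = M * h ^ 2 := by
        rw [show x - (x - h) = h by ring, Real.norm_eq_abs, _root_.abs_of_nonneg hh]; ring

lemma norm_one_sub_exp_sq (θ : ℝ) :
    ‖1 - Complex.exp ((θ : ℂ) * Complex.I)‖ ^ 2 = 2 - 2 * Real.cos θ := by
  rw [Complex.exp_mul_I, ← Complex.ofReal_cos, ← Complex.ofReal_sin]
  rw [Complex.sq_norm, Complex.normSq_apply]
  simp only [Complex.sub_re, Complex.sub_im, Complex.one_re, Complex.one_im,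
    Complex.add_re, Complex.add_im, Complex.ofReal_re, Complex.ofReal_im,
    Complex.mul_re, Complex.mul_im, Complex.I_re, Complex.I_im]
  have := Real.sin_sq_add_cos_sq θ
  nlinarith [this]

lemma norm_one_sub_exp_ge (p m d : ℤ) (hp : 0 < p) (hm0 : 0 < m) (hmp : m < p)
    (hd : d = min m (p - m)) :
    4 * (d : ℝ) / (p : ℝ) ≤ ‖1 - Complex.exp ((2 * Real.pi * m / p : ℝ) * Complex.I)‖ := by
  have hπ := Real.pi_pos
  have hp' : (0 : ℝ) < (p : ℝ) := by exact_mod_cast hp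
  have hd0 : 0 < d := by rcases hd with rfl; simp only [lt_min_iff]; omega
  have hd2 : 2 * d ≤ p := by
    rcases hd with rfl; rcases min_cases m (p - m) with ⟨h1, h2⟩ | ⟨h1, h2⟩ <;> omega
  have hd0' : (0 : ℝ) < (d : ℝ) := by exact_mod_cast hd0
  have hd2' : 2 * (d : ℝ) ≤ (p : ℝ) := by exact_mod_cast hd2
  set θ : ℝ := 2 * Real.pi * m / p with hθ
  have hhalf : θ / 2 = Real.pi * m / p := by rw [hθ]; ring
  have hsin_eq : Real.sin (θ / 2) = Real.sin (Real.pi * d / p) := by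
    rw [hhalf]
    rcases min_choice m (p - m) with h | h
    · rw [hd.trans h]
    · rw [hd.trans h]
      have harg : Real.pi * ((p : ℝ) - (m : ℝ)) / p = Real.pi - Real.pi * m / p := by
        field_simp
      rw [show ((p - m : ℤ) : ℝ) = (p : ℝ) - (m : ℝ) by push_cast; ring, harg, Real.sin_pi_sub]
  have hsin_ge : 2 * (d : ℝ) / p ≤ Real.sin (θ / 2) := by
    rw [hsin_eq]
    have h1 : 0 ≤ Real.pi * d / p := by positivity
    have h2 : Real.pi * d / p ≤ Real.pi / 2 := by
      rw [div_le_div_iff₀ hp' (by norm_num)]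
      nlinarith
    have hms := Real.mul_le_sin h1 h2
    calc 2 * (d : ℝ) / p = 2 / Real.pi * (Real.pi * d / p) := by field_simp
      _ ≤ Real.sin (Real.pi * d / p) := hms
  have hsq : ‖1 - Complex.exp ((θ : ℂ) * Complex.I)‖ ^ 2 = 4 * Real.sin (θ / 2) ^ 2 := by
    rw [norm_one_sub_exp_sq θ]
    have h1 := Real.cos_sq (θ / 2)
    have h2 := Real.sin_sq_add_cos_sq (θ / 2)
    have h3 : 2 * (θ / 2) = θ := by ring
    rw [h3] at h1
    nlinarith
  have hnn : 0 ≤ ‖1 - Complex.exp ((θ : ℂ) * Complex.I)‖ := norm_nonneg _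
  have hge : 0 ≤ 2 * (d : ℝ) / p := by positivity
  set B := ‖1 - Complex.exp ((θ : ℂ) * Complex.I)‖ with hB
  set a := 2 * (d : ℝ) / p with ha
  have hs2 : a ^ 2 ≤ Real.sin (θ / 2) ^ 2 := by
    apply pow_le_pow_left₀ hge hsin_ge
  have hgoal : 4 * (d : ℝ) / p = 2 * a := by rw [ha]; ring
  rw [hgoal]
  nlinarith [hs2, hsq, hnn, hge]

/-- For a fixed smooth cutoff `φ` there is a constant `C`, depending only on `φ`, such
that for every integer `p ≥ 2`, every `r ≥ 0` and every integer `t` not divisible by `p`: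
`|ψ_r(t)| ≤ C 2^{-r} p² / dist_p(t,0)²`. -/
theorem psi_decay_estimate (φ : ℝ → ℝ)
    (hφ_smooth : ContDiff ℝ (⊤ : ℕ∞) φ) (hφ_supp : HasCompactSupport φ)
    (hφ_nonneg : ∀ x, 0 ≤ φ x) (hφ_le_one : ∀ x, φ x ≤ 1)
    (hφ_one : ∀ x ∈ Set.Icc (-2 : ℝ) 2, φ x = 1)
    (hφ_supp' : ∀ x, φ x ≠ 0 → x ∈ Set.Icc (-2 - 1/100 : ℝ) (2 + 1/100)) :
    ∃ C : ℝ, 0 < C ∧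
      ∀ (p : ℕ) (r : ℕ), 2 ≤ p →
      ∀ t : ℤ, ¬ (p : ℤ) ∣ t →
        ‖psiInt φ p r t‖ ≤
          C * (2 : ℝ) ^ (-(r : ℤ)) * (p : ℝ) ^ 2 / ((distIntMod p t 0 : ℝ)) ^ 2 := by
  -- a bound on the second derivative
  have hφ' : ContDiff ℝ (⊤ : ℕ∞) (deriv φ) := by
    have := (contDiff_infty_iff_deriv.mp (by exact_mod_cast hφ_smooth)).2
    exact_mod_cast this
  have hφ'' : Continuous (deriv (deriv φ)) := by
    have := (contDiff_infty_iff_deriv.mp (by exact_mod_cast hφ')).2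
    exact this.continuous
  obtain ⟨M0, hM0⟩ := (hφ_supp.deriv.deriv).exists_bound_of_continuous hφ''
  set M : ℝ := max M0 1 with hMdef
  have hM1 : (1 : ℝ) ≤ M := le_max_right _ _
  have hM : ∀ y, |deriv (deriv φ) y| ≤ M := fun y =>
    le_trans (by simpa using hM0 y) (le_max_left _ _)
  have hMpos : 0 < M := lt_of_lt_of_le one_pos hM1
  refine ⟨9 * M, by positivity, ?_⟩
  intro p r hp2 t hpd
  have hπ := Real.pi_pos
  have hp : (0 : ℤ) < (p : ℤ) := by exact_mod_cast Nat.lt_of_lt_of_le Nat.zero_lt_two hp2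
  have hp' : (0 : ℝ) < (p : ℝ) := by exact_mod_cast hp
  -- notation
  set m : ℤ := t % (p : ℤ) with hmdef
  have hm0 : 0 < m := by
    rcases lt_or_eq_of_le (Int.emod_nonneg t (ne_of_gt hp)) with h | h
    · exact h
    · exact absurd (Int.dvd_of_emod_eq_zero h.symm) hpd
  have hmp : m < (p : ℤ) := Int.emod_lt_of_pos t hp
  have hneg : (-t) % (p : ℤ) = (p : ℤ) - m := by
    have hq : (p : ℤ) * (t / (p : ℤ)) + m = t := Int.mul_ediv_add_emod t (p : ℤ)
    have he : -t = ((p : ℤ) - m) + (p : ℤ) * (-(t / (p : ℤ)) - 1) := by linarith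
    rw [he, Int.add_mul_emod_self_left]
    exact Int.emod_eq_of_lt (by omega) (by omega)
  set d : ℤ := distIntMod p t 0 with hddef
  have hd : d = min m ((p : ℤ) - m) := by
    rw [hddef, distIntMod, sub_zero, zero_sub, ← hmdef, hneg]
  have hd0 : 0 < d := by rw [hd]; simp only [lt_min_iff]; omega
  have hD : (0 : ℝ) < (d : ℝ) := by exact_mod_cast hd0
  -- z and its properties
  set z : ℂ := Complex.exp (2 * Real.pi * Complex.I * (t : ℂ) / (p : ℂ)) with hzdef
  have hz : z ≠ 0 := Complex.exp_ne_zero _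
  have hpc : ((p : ℕ) : ℂ) ≠ 0 := by exact_mod_cast hp'.ne'
  -- z = exp(2π m/p * I)
  have hz_eq : z = Complex.exp (((2 * Real.pi * (m : ℝ) / ((p : ℤ) : ℝ) : ℝ) : ℂ) * Complex.I) := by
    have hq : (p : ℤ) * (t / (p : ℤ)) + m = t := Int.mul_ediv_add_emod t (p : ℤ)
    have hc : (t : ℂ) = ((p : ℕ) : ℂ) * ((t / (p : ℤ) : ℤ) : ℂ) + ((m : ℤ) : ℂ) := by
      exact_mod_cast congrArg (fun x : ℤ => (x : ℂ)) hq.symm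
    have harg : 2 * (Real.pi : ℂ) * Complex.I * (t : ℂ) / ((p : ℕ) : ℂ) =
        (((2 * Real.pi * (m : ℝ) / ((p : ℤ) : ℝ) : ℝ)) : ℂ) * Complex.I +
          ((t / (p : ℤ) : ℤ) : ℂ) * (2 * (Real.pi : ℂ) * Complex.I) := by
      rw [hc]
      push_cast
      field_simp
      ring
    rw [hzdef, harg, Complex.exp_add, Complex.exp_int_mul_two_pi_mul_I, mul_one]
  have hznorm : ‖z‖ = 1 := by
    rw [hz_eq, Complex.norm_exp_ofReal_mul_I]
  have hlow : 4 * (d : ℝ) / ((p : ℤ) : ℝ) ≤ ‖1 - z‖ := by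
    rw [hz_eq]
    exact norm_one_sub_exp_ge (p : ℤ) m d hp hm0 hmp hd
  -- the coefficients
  set h : ℝ := ((2 : ℝ) ^ r)⁻¹ with hhdef
  have hhpos : 0 < h := by positivity
  set a : ℤ → ℂ := fun l => ((φ ((l : ℝ) / 2 ^ r) : ℝ) : ℂ) with hadef
  set N : ℤ := 3 * 2 ^ r with hNdef
  have hNpos : 0 < N := by positivity
  have h2r : (1 : ℝ) ≤ (2 : ℝ) ^ r := one_le_pow₀ (by norm_num)
  have hNr : ((N : ℤ) : ℝ) = 3 * (2 : ℝ) ^ r := by rw [hNdef]; push_cast; ring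
  have hvanish : ∀ l : ℤ, N < l ∨ l < -N → a l = 0 := by
    intro l hl
    rw [hadef]
    simp only [Complex.ofReal_eq_zero]
    by_contra hne
    have hmem := hφ_supp' _ hne
    rw [Set.mem_Icc] at hmem
    have h1 : ((l : ℝ)) ≤ (2 + 1/100) * 2 ^ r := by
      have := hmem.2
      rw [div_le_iff₀ (by positivity)] at this
      linarith
    have h2 : (-(2 + 1/100)) * 2 ^ r ≤ (l : ℝ) := by
      have := hmem.1
      rw [le_div_iff₀ (by positivity)] at this
      nlinarith
    rcases hl with hl | hl
    · have : ((N : ℤ) : ℝ) < (l : ℝ) := by exact_mod_cast hl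
      rw [hNr] at this
      nlinarith
    · have : ((l : ℤ) : ℝ) < -((N : ℤ) : ℝ) := by exact_mod_cast hl
      rw [hNr] at this
      nlinarith
  have ha0 : ∀ l ∉ Finset.Icc (-N) N, a l = 0 := by
    intro l hl
    rw [Finset.mem_Icc] at hl
    exact hvanish l (by omega)
  set f1 : ℤ → ℂ := fun l => a l - a (l - 1) with hf1def
  have hf10 : ∀ l ∉ Finset.Icc (-N) (N + 1), f1 l = 0 := by
    intro l hl
    rw [Finset.mem_Icc] at hl
    rw [hf1def]
    simp only
    rw [hvanish l (by omega), hvanish (l - 1) (by omega), sub_zero]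
  -- the series identity
  have hS : psiInt φ p r t = ∑' l : ℤ, a l * z ^ l := by
    rw [psiInt]
    refine tsum_congr fun l => ?_
    rw [hadef]
    congr 1
    rw [hzdef, ← Complex.exp_int_mul]
    congr 1
    ring
  have key : (1 - z) ^ 2 * psiInt φ p r t = ∑' l : ℤ, (f1 l - f1 (l - 1)) * z ^ l := by
    calc (1 - z) ^ 2 * psiInt φ p r t
        = (1 - z) * ((1 - z) * ∑' l : ℤ, a l * z ^ l) := by rw [hS]; ring
      _ = (1 - z) * ∑' l : ℤ, (a l - a (l - 1)) * z ^ l := by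
          rw [abel_step z hz a (Finset.Icc (-N) N) ha0]
      _ = ∑' l : ℤ, (f1 l - f1 (l - 1)) * z ^ l := by
          rw [hf1def]
          exact abel_step z hz (fun l => a l - a (l - 1)) (Finset.Icc (-N) (N + 1)) hf10
  -- bound the right-hand side
  have hterm : ∀ l : ℤ, ‖(f1 l - f1 (l - 1)) * z ^ l‖ ≤ M * h ^ 2 := by
    intro l
    rw [norm_mul, norm_zpow, hznorm, one_zpow, mul_one]
    have hexpand : f1 l - f1 (l - 1) =
        ((φ ((l : ℝ) / 2 ^ r) - 2 * φ ((l : ℝ) / 2 ^ r - h) +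
          φ ((l : ℝ) / 2 ^ r - 2 * h) : ℝ) : ℂ) := by
      rw [hf1def, hadef]
      simp only
      have e1 : (((l - 1 : ℤ) : ℝ)) / 2 ^ r = (l : ℝ) / 2 ^ r - h := by
        push_cast
        rw [hhdef]
        field_simp
      have e2 : (((l - 1 - 1 : ℤ) : ℝ)) / 2 ^ r = (l : ℝ) / 2 ^ r - 2 * h := by
        push_cast
        rw [hhdef]
        field_simp
        ring
      rw [e1, e2]
      push_cast
      ring
    rw [hexpand, Complex.norm_real, Real.norm_eq_abs]
    exact second_diff_bound φ hφ_smooth M hM _ h hhpos.le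
  have hsupp2 : ∀ l ∉ Finset.Icc (-N) (N + 2), (f1 l - f1 (l - 1)) * z ^ l = 0 := by
    intro l hl
    rw [Finset.mem_Icc] at hl
    have z1 : f1 l = 0 := hf10 l (by rw [Finset.mem_Icc]; omega)
    have z2 : f1 (l - 1) = 0 := hf10 (l - 1) (by rw [Finset.mem_Icc]; omega)
    rw [z1, z2, sub_zero, zero_mul]
  have hcard : ((Finset.Icc (-N) (N + 2)).card : ℝ) ≤ 9 * (2 : ℝ) ^ r := by
    rw [Int.card_Icc]
    have : (N + 2 + 1 - -N) = 2 * N + 3 := by ring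
    rw [this]
    have hN0 : (0 : ℤ) ≤ 2 * N + 3 := by positivity
    have h1 : ((2 * N + 3).toNat : ℝ) = ((2 * N + 3 : ℤ) : ℝ) := by
      exact_mod_cast congrArg (fun x : ℤ => (x : ℝ)) (Int.toNat_of_nonneg hN0)
    rw [h1]
    push_cast
    rw [hNdef]
    push_cast
    nlinarith
  have hsum : ‖(1 - z) ^ 2 * psiInt φ p r t‖ ≤ 9 * (2 : ℝ) ^ r * (M * h ^ 2) := by
    rw [key, tsum_eq_sum hsupp2]
    calc ‖∑ l ∈ Finset.Icc (-N) (N + 2), (f1 l - f1 (l - 1)) * z ^ l‖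
        ≤ ∑ l ∈ Finset.Icc (-N) (N + 2), ‖(f1 l - f1 (l - 1)) * z ^ l‖ := norm_sum_le _ _
      _ ≤ ∑ _l ∈ Finset.Icc (-N) (N + 2), M * h ^ 2 := Finset.sum_le_sum fun l _ => hterm l
      _ = ((Finset.Icc (-N) (N + 2)).card : ℝ) * (M * h ^ 2) := by
          rw [Finset.sum_const, nsmul_eq_mul]
      _ ≤ 9 * (2 : ℝ) ^ r * (M * h ^ 2) := by
          apply mul_le_mul_of_nonneg_right hcard (by positivity)
  have hsum' : ‖1 - z‖ ^ 2 * ‖psiInt φ p r t‖ ≤ 9 * M * h := by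
    have e : ‖(1 - z) ^ 2 * psiInt φ p r t‖ = ‖1 - z‖ ^ 2 * ‖psiInt φ p r t‖ := by
      rw [norm_mul, norm_pow]
    rw [← e]
    calc ‖(1 - z) ^ 2 * psiInt φ p r t‖ ≤ 9 * (2 : ℝ) ^ r * (M * h ^ 2) := hsum
      _ = 9 * M * h := by
          rw [hhdef]
          field_simp
  -- conclude
  have hBp : 16 * (d : ℝ) ^ 2 ≤ ‖1 - z‖ ^ 2 * (p : ℝ) ^ 2 := by
    have h4 : 4 * (d : ℝ) ≤ ‖1 - z‖ * (p : ℝ) := by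
      have := hlow
      rw [div_le_iff₀ (by exact_mod_cast hp')] at this
      push_cast at this ⊢
      linarith
    have h5 : 0 ≤ 4 * (d : ℝ) := by positivity
    calc 16 * (d : ℝ) ^ 2 = (4 * (d : ℝ)) * (4 * (d : ℝ)) := by ring
      _ ≤ (‖1 - z‖ * (p : ℝ)) * (‖1 - z‖ * (p : ℝ)) := mul_self_le_mul_self h5 h4
      _ = ‖1 - z‖ ^ 2 * (p : ℝ) ^ 2 := by ring
  have hmain : ‖psiInt φ p r t‖ * (16 * (d : ℝ) ^ 2) ≤ (9 * M * h) * (p : ℝ) ^ 2 := by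
    have h1 : ‖psiInt φ p r t‖ * (16 * (d : ℝ) ^ 2) ≤
        ‖psiInt φ p r t‖ * (‖1 - z‖ ^ 2 * (p : ℝ) ^ 2) :=
      mul_le_mul_of_nonneg_left hBp (norm_nonneg _)
    have h2 : (‖1 - z‖ ^ 2 * ‖psiInt φ p r t‖) * (p : ℝ) ^ 2 ≤ (9 * M * h) * (p : ℝ) ^ 2 :=
      mul_le_mul_of_nonneg_right hsum' (by positivity)
    calc ‖psiInt φ p r t‖ * (16 * (d : ℝ) ^ 2)
        ≤ ‖psiInt φ p r t‖ * (‖1 - z‖ ^ 2 * (p : ℝ) ^ 2) := h1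
      _ = (‖1 - z‖ ^ 2 * ‖psiInt φ p r t‖) * (p : ℝ) ^ 2 := by ring
      _ ≤ (9 * M * h) * (p : ℝ) ^ 2 := h2
  have hzp : (2 : ℝ) ^ (-(r : ℤ)) = h := by
    rw [hhdef, zpow_neg, zpow_natCast]
  rw [hzp]
  rw [le_div_iff₀ (by positivity : (0 : ℝ) < ((d : ℤ) : ℝ) ^ 2)]
  have hpos : (0 : ℝ) ≤ 9 * M * h * (p : ℝ) ^ 2 := by positivity
  have hnn : (0 : ℝ) ≤ ‖psiInt φ p r t‖ * (d : ℝ) ^ 2 :=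
    mul_nonneg (norm_nonneg _) (sq_nonneg _)
  linarith [hmain, hpos, hnn]
end
end
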